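/- Every maximal unwinnable divisor on G has degree g − 1; consequently every divisor of degree at least g is winnable. -/

import Mathlib

open Finset

/-- A finite loopless undirected multigraph on vertex set `V`, given by symmetric
edge multiplicities. -/
structure Multigraph (V : Type) where
  E : V → V → ℕ
  symm : ∀ u v, E u v = E v u
  loopless : ∀ v, E v v = 0

variable {V : Type} [Fintype V] [DecidableEq V]

/-- The valence (degree) of a vertex: number of incident edges. -/
def Multigraph.val (G : Multigraph V) (v : V) : ℕ := ∑ w, G.E v w

/-- Connectivity of a multigraph. -/
def Multigraph.Connected (G : Multigraph V) : Prop :=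
  ∀ u v : V, Relation.ReflTransGen (fun a b => 0 < G.E a b) u v

/-- Degree of a divisor. -/
def divDeg (D : V → ℤ) : ℤ := ∑ v, D v

/-- The graph Laplacian applied to a firing script. -/
def lap (G : Multigraph V) (σ : V → ℤ) : V → ℤ :=
  fun v => ∑ w, (G.E v w : ℤ) * (σ v - σ w)

/-- Lending move at `v`. -/
def lend (G : Multigraph V) (D : V → ℤ) (v : V) : V → ℤ :=
  fun w => if w = v then D v - (G.val v : ℤ) else D w + (G.E v w : ℤ)

/-- Borrowing move at `v`. -/
def borrow (G : Multigraph V) (D : V → ℤ) (v : V) : V → ℤ :=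
  fun w => if w = v then D v + (G.val v : ℤ) else D w - (G.E v w : ℤ)

/-- Linear equivalence: generated by lending moves. -/
def LinEquiv (G : Multigraph V) : (V → ℤ) → (V → ℤ) → Prop :=
  Relation.ReflTransGen (fun D D' => ∃ v, D' = lend G D v)

/-- The number of edges of the multigraph. -/
def edgeCount (G : Multigraph V) : ℕ := (∑ u, ∑ w, G.E u w) / 2

/-- The genus of the multigraph, `g = |E| - |V| + 1`. -/
def genus (G : Multigraph V) : ℤ := (edgeCount G : ℤ) - (Fintype.card V : ℤ) + 1

/-- A divisor is effective if all its values are nonnegative. -/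
def Effective (D : V → ℤ) : Prop := ∀ v, 0 ≤ D v

/-- A divisor is winnable if it is linearly equivalent to an effective divisor. -/
def Winnable (G : Multigraph V) (D : V → ℤ) : Prop :=
  ∃ D' : V → ℤ, LinEquiv G D D' ∧ Effective D'

/-- A maximal unwinnable divisor: unwinnable, but adding one chip at any vertex makes
it winnable. -/
def MaximalUnwinnable (G : Multigraph V) (D : V → ℤ) : Prop :=
  ¬ Winnable G D ∧ ∀ v : V, Winnable G (fun w => D w + if w = v then 1 else 0)


set_option linter.unusedSectionVars false
section Proofs
variable {V : Type} [Fintype V] [DecidableEq V] (G : Multigraph V)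

lemma lap_add (σ τ : V → ℤ) (v : V) :
    lap G (fun x => σ x + τ x) v = lap G σ v + lap G τ v := by
  unfold lap
  rw [← Finset.sum_add_distrib]
  exact Finset.sum_congr rfl fun w _ => by ring

lemma lap_sub (σ τ : V → ℤ) (v : V) :
    lap G (fun x => σ x - τ x) v = lap G σ v - lap G τ v := by
  unfold lap
  rw [← Finset.sum_sub_distrib]
  exact Finset.sum_congr rfl fun w _ => by ring

lemma lap_mul (k : ℤ) (σ : V → ℤ) (v : V) :
    lap G (fun x => k * σ x) v = k * lap G σ v := by
  unfold lap
  rw [Finset.mul_sum]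
  exact Finset.sum_congr rfl fun w _ => by ring

lemma lap_const (c : ℤ) (v : V) : lap G (fun _ => c) v = 0 := by
  simp [lap]

lemma lap_zero (v : V) : lap G (fun _ => 0) v = 0 := lap_const G 0 v

/-- indicator of a finset -/
def ind (S : Finset V) : V → ℤ := fun x => if x ∈ S then 1 else 0

/-- number of edges from `v` into `S` -/
def eTo (G : Multigraph V) (v : V) (S : Finset V) : ℕ := ∑ w ∈ S, G.E v w

lemma lap_ind (S : Finset V) (v : V) :
    lap G (ind S) v = (if v ∈ S then (eTo G v Sᶜ : ℤ) else -(eTo G v S : ℤ)) := by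
  unfold lap ind eTo
  by_cases hv : v ∈ S
  · simp only [hv, if_true]
    have : ∀ w ∈ Finset.univ, (G.E v w : ℤ) * ((1:ℤ) - if w ∈ S then 1 else 0)
        = if w ∈ Sᶜ then (G.E v w : ℤ) else 0 := by
      intro w _
      by_cases hw : w ∈ S <;> simp [hw]
    rw [Finset.sum_congr rfl this, Finset.sum_ite_mem, Finset.univ_inter,
      Nat.cast_sum]
  · simp only [hv, if_false]
    have : ∀ w ∈ Finset.univ, (G.E v w : ℤ) * ((0:ℤ) - if w ∈ S then 1 else 0)
        = -(if w ∈ S then (G.E v w : ℤ) else 0) := by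
      intro w _
      by_cases hw : w ∈ S <;> simp [hw]
    rw [Finset.sum_congr rfl this, Finset.sum_neg_distrib, Finset.sum_ite_mem,
      Finset.univ_inter, Nat.cast_sum]

lemma lend_eq (D : V → ℤ) (v : V) :
    lend G D v = fun w => D w - lap G (ind {v}) w := by
  funext w
  rw [lap_ind]
  simp only [lend, Finset.mem_singleton]
  by_cases hw : w = v
  · subst hw
    simp [if_true, eTo, Multigraph.val]
    rw [← Finset.sum_compl_add_sum ({w} : Finset V)ᶜ]
    simp [G.loopless]
  · simp [hw, eTo, G.symm w v]

lemma linEquiv_of_sigma_nat (D : V → ℤ) (σ : V → ℕ) :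
    LinEquiv G D (fun v => D v - lap G (fun x => (σ x : ℤ)) v) := by
  generalize hn : (∑ x, σ x) = n
  induction n generalizing D σ with
  | zero =>
    have h0 : ∀ x, σ x = 0 := by
      intro x
      have := Finset.sum_eq_zero_iff.mp hn
      exact this x (Finset.mem_univ x)
    have : (fun v => D v - lap G (fun x => (σ x : ℤ)) v) = D := by
      funext v
      simp [h0, lap_zero]
    rw [this]
    exact Relation.ReflTransGen.refl
  | succ n ih =>
    have hex : ∃ x, 0 < σ x := by
      by_contra h
      push_neg at h
      simp only [Nat.le_zero] at h
      rw [Finset.sum_eq_zero (fun x _ => h x)] at hn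
      omega
    obtain ⟨x0, hx0⟩ := hex
    set τ : V → ℕ := fun x => σ x - (if x = x0 then 1 else 0) with hτ
    have hτs : ∑ x, τ x = n := by
      have hsplit : ∀ x ∈ Finset.univ, (if x = x0 then 1 else 0) ≤ σ x := by
        intro x _
        split
        · next h => subst h; omega
        · omega
      have : ∑ x, τ x = ∑ x, σ x - ∑ x, (if x = x0 then 1 else 0) := by
        show ∑ x, (σ x - if x = x0 then 1 else 0) = _
        rw [Finset.sum_tsub_distrib Finset.univ hsplit]
      rw [this, Finset.sum_ite_eq' Finset.univ x0 (fun _ => 1)]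
      simp only [Finset.mem_univ, if_true]
      omega
    refine Relation.ReflTransGen.head ⟨x0, rfl⟩ ?_
    have : Relation.ReflTransGen _ _ _ := ih (lend G D x0) τ hτs
    convert this using 1
    funext v
    rw [lend_eq]
    have hcast : ∀ x, (σ x : ℤ) = (τ x : ℤ) + ind {x0} x := by
      intro x
      have hτx : τ x = σ x - (if x = x0 then 1 else 0) := rfl
      rw [hτx]
      simp only [ind, Finset.mem_singleton]
      split
      · next h => subst h; omega
      · omega
    have : lap G (fun x => (σ x : ℤ)) v
        = lap G (fun x => (τ x : ℤ)) v + lap G (ind {x0}) v := by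
      rw [← lap_add]
      exact congrFun (congrArg (lap G) (funext hcast)) v
    rw [this]
    ring

lemma linEquiv_iff (D D' : V → ℤ) :
    LinEquiv G D D' ↔ ∃ σ : V → ℤ, ∀ v, D' v = D v - lap G σ v := by
  constructor
  · intro h
    induction h with
    | refl => exact ⟨fun _ => 0, fun v => by simp [lap_zero]⟩
    | @tail M D2 _ hstep ih =>
      obtain ⟨σ, hσ⟩ := ih
      obtain ⟨v0, rfl⟩ := hstep
      refine ⟨fun x => σ x + ind {v0} x, fun v => ?_⟩
      rw [lend_eq, lap_add]
      show M v - lap G (ind {v0}) v = D v - (lap G σ v + lap G (ind {v0}) v)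
      rw [hσ v]
      ring
  · rintro ⟨σ, hσ⟩
    set c : ℤ := ∑ x, |σ x| with hc
    have habs : ∀ x, |σ x| ≤ c := fun x =>
      Finset.single_le_sum (fun y _ => abs_nonneg (σ y)) (Finset.mem_univ x)
    set τ : V → ℕ := fun x => (σ x + c).toNat with hτ
    have hcast : ∀ x, (τ x : ℤ) = σ x + c := by
      intro x
      have h2 : -σ x ≤ c := le_trans (neg_le_abs (σ x)) (habs x)
      show ((σ x + c).toNat : ℤ) = σ x + c
      exact Int.toNat_of_nonneg (by omega)
    have hlap : ∀ v, lap G (fun x => (τ x : ℤ)) v = lap G σ v := by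
      intro v
      have : (fun x => (τ x : ℤ)) = fun x => σ x + (fun _ : V => c) x := by
        funext x; exact hcast x
      rw [this, lap_add, lap_const, add_zero]
    have := linEquiv_of_sigma_nat G D τ
    have heq : (fun v => D v - lap G (fun x => (τ x : ℤ)) v) = D' := by
      funext v
      rw [hlap, hσ v]
    rwa [heq] at this

lemma winnable_iff (D : V → ℤ) :
    Winnable G D ↔ ∃ σ : V → ℤ, ∀ v, 0 ≤ D v - lap G σ v := by
  constructor
  · rintro ⟨D', hle, heff⟩
    obtain ⟨σ, hσ⟩ := (linEquiv_iff G D D').mp hle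
    exact ⟨σ, fun v => (hσ v) ▸ heff v⟩
  · rintro ⟨σ, hσ⟩
    exact ⟨fun v => D v - lap G σ v, (linEquiv_iff G D _).mpr ⟨σ, fun _ => rfl⟩,
      fun v => hσ v⟩

end Proofs
section Proofs2
set_option linter.unusedSectionVars false
variable {V : Type} [Fintype V] [DecidableEq V] (G : Multigraph V)

lemma cross_aux (S : Finset V) :
    ∀ {x y : V}, Relation.ReflTransGen (fun a b => 0 < G.E a b) x y →
      x ∈ S → y ∉ S → ∃ a ∈ S, ∃ b, b ∉ S ∧ 0 < G.E a b := by
  intro x y h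
  induction h with
  | refl => intro h1 h2; exact absurd h1 h2
  | @tail c d _ hstep ih =>
    intro hx hy
    by_cases hc : c ∈ S
    · exact ⟨c, hc, d, hy, hstep⟩
    · exact ih hx hc

lemma cross (hG : G.Connected) (S : Finset V) (hne : S.Nonempty) (hpr : S ≠ Finset.univ) :
    ∃ a ∈ S, ∃ b, b ∉ S ∧ 0 < G.E a b := by
  obtain ⟨x, hx⟩ := hne
  have : ∃ y, y ∉ S := by
    by_contra h
    push_neg at h
    exact hpr (Finset.eq_univ_iff_forall.mpr h)
  obtain ⟨y, hy⟩ := this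
  exact cross_aux G S (hG x y) hx hy

lemma sum_antisym (S : Finset V) (f : V → ℤ) :
    ∑ w ∈ S, ∑ u ∈ S, (G.E w u : ℤ) * (f w - f u) = 0 := by
  have expand : ∀ w u, (G.E w u : ℤ) * (f w - f u)
      = (G.E w u : ℤ) * f w - (G.E w u : ℤ) * f u := fun w u => by ring
  have h2 : ∑ w ∈ S, ∑ u ∈ S, (G.E w u : ℤ) * f u
      = ∑ w ∈ S, ∑ u ∈ S, (G.E w u : ℤ) * f w := by
    rw [Finset.sum_comm]
    exact Finset.sum_congr rfl fun w _ => Finset.sum_congr rfl fun u _ => by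
      rw [G.symm]
  simp only [expand, Finset.sum_sub_distrib, h2, sub_self]

/-- stage 1: make the divisor effective outside `T` -/
lemma stage1_aux (hG : G.Connected) (D : V → ℤ) :
    ∀ (k : ℕ) (T : Finset V), T.Nonempty → Finset.card Tᶜ ≤ k →
      ∃ σ : V → ℤ, ∀ v ∉ T, 0 ≤ D v - lap G σ v := by
  intro k
  induction k with
  | zero =>
    intro T _ hc
    have : Tᶜ = ∅ := Finset.card_eq_zero.mp (Nat.le_zero.mp hc)
    refine ⟨fun _ => 0, fun v hv => absurd ?_ hv⟩
    by_contra hvT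
    have : v ∈ Tᶜ := Finset.mem_compl.mpr hvT
    simp [‹Tᶜ = ∅›] at this
  | succ k ih =>
    intro T hTne hc
    by_cases hT : T = Finset.univ
    · refine ⟨fun _ => 0, fun v hv => absurd (hT ▸ Finset.mem_univ v) hv⟩
    -- find a ∉ T with an edge to T
    have hcne : (Tᶜ : Finset V).Nonempty := by
      by_contra h
      rw [Finset.not_nonempty_iff_eq_empty, Finset.compl_eq_empty_iff] at h
      exact hT h
    have hcpr : (Tᶜ : Finset V) ≠ Finset.univ := by
      intro h
      obtain ⟨t, ht⟩ := hTne
      have : t ∈ Tᶜ := h ▸ Finset.mem_univ t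
      exact (Finset.mem_compl.mp this) ht
    obtain ⟨a, haC, b, hbC, hab⟩ := cross G hG Tᶜ hcne hcpr
    have haT : a ∉ T := Finset.mem_compl.mp haC
    have hbT : b ∈ T := by
      by_contra h
      exact hbC (Finset.mem_compl.mpr h)
    have hcard : Finset.card (insert a T)ᶜ ≤ k := by
      have h1 : (insert a T)ᶜ = Tᶜ.erase a := by
        ext x
        simp only [Finset.mem_compl, Finset.mem_erase, Finset.mem_insert]
        tauto
      rw [h1]
      have := Finset.card_erase_of_mem haC
      omega
    obtain ⟨σ, hσ⟩ := ih (insert a T) ⟨a, Finset.mem_insert_self a T⟩ hcard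
    -- borrow the set Tᶜ enough times to fix a
    set k0 : ℤ := max 0 (-(D a - lap G σ a)) with hk0
    refine ⟨fun x => σ x - k0 * ind Tᶜ x, ?_⟩
    intro v hv
    have hlap : lap G (fun x => σ x - k0 * ind Tᶜ x) v
        = lap G σ v - k0 * lap G (ind Tᶜ) v := by
      rw [lap_sub, lap_mul]
    rw [hlap]
    have hvC : v ∈ Tᶜ := Finset.mem_compl.mpr hv
    have hlapind : lap G (ind Tᶜ) v = (eTo G v T : ℤ) := by
      rw [lap_ind, if_pos hvC, compl_compl]
    rw [hlapind]
    have hk0nn : 0 ≤ k0 := le_max_left _ _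
    by_cases hva : v = a
    · subst hva
      have hge1 : 1 ≤ (eTo G v T : ℤ) := by
        have : 0 < eTo G v T := by
          unfold eTo
          refine Finset.sum_pos' (fun w _ => Nat.zero_le _) ⟨b, hbT, hab⟩
        exact_mod_cast this
      have : k0 ≤ k0 * (eTo G v T : ℤ) := le_mul_of_one_le_right hk0nn hge1
      have hk0b : -(D v - lap G σ v) ≤ k0 := le_max_right _ _
      omega
    · have hvT' : v ∉ insert a T := by
        intro h
        rcases Finset.mem_insert.mp h with h | h
        · exact hva h
        · exact hv h
      have h1 : 0 ≤ D v - lap G σ v := hσ v hvT'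
      have h2 : 0 ≤ k0 * (eTo G v T : ℤ) :=
        mul_nonneg hk0nn (Int.natCast_nonneg _)
      omega

lemma stage1 (hG : G.Connected) (D : V → ℤ) (q : V) :
    ∃ σ : V → ℤ, ∀ v, v ≠ q → 0 ≤ D v - lap G σ v := by
  obtain ⟨σ, hσ⟩ := stage1_aux G hG D (Finset.card ({q} : Finset V)ᶜ) {q}
    ⟨q, Finset.mem_singleton_self q⟩ le_rfl
  exact ⟨σ, fun v hv => hσ v (by simp [hv])⟩

end Proofs2
section Proofs3
set_option linter.unusedSectionVars false
variable {V : Type} [Fintype V] [DecidableEq V] (G : Multigraph V)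

/-- "No stuck set" for subsets of `A`: Dhar's burning condition. -/
def NoStuckOn (G : Multigraph V) (A : Finset V) (D : V → ℤ) : Prop :=
  ∀ S : Finset V, S ⊆ A → S.Nonempty → ∃ v ∈ S, D v < (eTo G v Sᶜ : ℤ)

lemma sigma_bound (hG : G.Connected) (q : V) (D1 : V → ℤ)
    (hD1 : ∀ v, v ≠ q → 0 ≤ D1 v) (σ : V → ℤ) (hq : σ q = 0)
    (hnn : ∀ v, 0 ≤ σ v) (hlapb : ∀ v, v ≠ q → lap G σ v ≤ D1 v) :
    ∀ v, σ v ≤ (∑ w ∈ Finset.univ.erase q, D1 w) * (Fintype.card V : ℤ) := by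
  set C : ℤ := ∑ w ∈ Finset.univ.erase q, D1 w with hCdef
  have hC : 0 ≤ C :=
    Finset.sum_nonneg fun w hw => hD1 w (Finset.ne_of_mem_erase hw)
  have key : ∀ (k : ℕ) (v : V),
      (Finset.univ.filter (fun w => σ w < σ v)).card ≤ k →
      σ v ≤ C * ((Finset.univ.filter (fun w => σ w < σ v)).card : ℤ) := by
    intro k
    induction k with
    | zero =>
      intro v hv
      have hemp : (Finset.univ.filter (fun w => σ w < σ v)) = ∅ :=
        Finset.card_eq_zero.mp (Nat.le_zero.mp hv)
      have hqn : ¬ (σ q < σ v) := by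
        intro h
        have : q ∈ Finset.univ.filter (fun w => σ w < σ v) := by
          simp [h]
        simp [hemp] at this
      rw [hemp]
      simp only [Finset.card_empty, Nat.cast_zero, mul_zero]
      omega
    | succ k ih =>
      intro v hv
      by_cases h0 : σ v ≤ 0
      · exact le_trans h0 (mul_nonneg hC (Int.natCast_nonneg _))
      push_neg at h0
      set S : Finset V := Finset.univ.filter (fun w => σ v ≤ σ w) with hSdef
      have hvS : v ∈ S := by simp [hSdef]
      have hqS : q ∉ S := by simp [hSdef]; omega
      have hSne : S.Nonempty := ⟨v, hvS⟩
      have hSpr : S ≠ Finset.univ := fun h => hqS (h ▸ Finset.mem_univ q)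
      obtain ⟨a, haS, b, hbS, hab⟩ := cross G hG S hSne hSpr
      have hav : σ v ≤ σ a := by
        have := Finset.mem_filter.mp haS
        exact this.2
      have hbv : σ b < σ v := by
        have : ¬ (σ v ≤ σ b) := fun h => hbS (by simp [hSdef, h])
        omega
      -- key inequality: σ v - σ b ≤ ∑_{w ∈ S} lap σ w ≤ C
      have hsplit : ∑ w ∈ S, lap G σ w
          = ∑ w ∈ S, ∑ u ∈ Sᶜ, (G.E w u : ℤ) * (σ w - σ u) := by
        have : ∀ w ∈ S, lap G σ w
            = (∑ u ∈ S, (G.E w u : ℤ) * (σ w - σ u))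
              + ∑ u ∈ Sᶜ, (G.E w u : ℤ) * (σ w - σ u) := by
          intro w _
          rw [Finset.sum_add_sum_compl]
          rfl
        rw [Finset.sum_congr rfl this, Finset.sum_add_distrib,
          sum_antisym G S σ, zero_add]
      have hub : ∑ w ∈ S, lap G σ w ≤ C := by
        have h1 : ∑ w ∈ S, lap G σ w ≤ ∑ w ∈ S, D1 w :=
          Finset.sum_le_sum fun w hw => hlapb w (by
            intro h
            exact hqS (h ▸ hw))
        have h2 : ∑ w ∈ S, D1 w ≤ C := by
          rw [hCdef]
          refine Finset.sum_le_sum_of_subset_of_nonneg ?_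
            (fun w hw _ => hD1 w (Finset.ne_of_mem_erase hw))
          intro w hw
          refine Finset.mem_erase.mpr ⟨fun h => hqS (h ▸ hw), Finset.mem_univ w⟩
        omega
      have hterm_nonneg : ∀ w ∈ S, ∀ u ∈ Sᶜ, 0 ≤ (G.E w u : ℤ) * (σ w - σ u) := by
        intro w hw u hu
        have hw' : σ v ≤ σ w := (Finset.mem_filter.mp hw).2
        have hu' : ¬ (σ v ≤ σ u) := by
          intro h
          exact (Finset.mem_compl.mp hu) (by simp [hSdef, h])
        exact mul_nonneg (Int.natCast_nonneg _) (by omega)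
      have hlb : σ v - σ b ≤ ∑ w ∈ S, ∑ u ∈ Sᶜ, (G.E w u : ℤ) * (σ w - σ u) := by
        have hbC : b ∈ Sᶜ := Finset.mem_compl.mpr hbS
        have hinner : σ v - σ b ≤ ∑ u ∈ Sᶜ, (G.E a u : ℤ) * (σ a - σ u) := by
          have h1 : σ v - σ b ≤ (G.E a b : ℤ) * (σ a - σ b) := by
            have hEab : 1 ≤ (G.E a b : ℤ) := by exact_mod_cast hab
            have h2 : σ a - σ b ≤ (G.E a b : ℤ) * (σ a - σ b) :=
              le_mul_of_one_le_left (by omega) hEab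
            omega
          calc σ v - σ b ≤ (G.E a b : ℤ) * (σ a - σ b) := h1
            _ ≤ ∑ u ∈ Sᶜ, (G.E a u : ℤ) * (σ a - σ u) :=
              Finset.single_le_sum (hterm_nonneg a haS) hbC
        calc σ v - σ b ≤ ∑ u ∈ Sᶜ, (G.E a u : ℤ) * (σ a - σ u) := hinner
          _ ≤ ∑ w ∈ S, ∑ u ∈ Sᶜ, (G.E w u : ℤ) * (σ w - σ u) :=
            Finset.single_le_sum
              (fun w hw => Finset.sum_nonneg (hterm_nonneg w hw)) haS
      have hmain : σ v ≤ C + σ b := by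
        rw [hsplit] at hub
        omega
      -- induction at b
      have hsub : Finset.univ.filter (fun w => σ w < σ b)
          ⊂ Finset.univ.filter (fun w => σ w < σ v) := by
        constructor
        · intro w hw
          simp only [Finset.mem_filter] at hw ⊢
          exact ⟨hw.1, by omega⟩
        · intro h
          have : b ∈ Finset.univ.filter (fun w => σ w < σ v) := by simp [hbv]
          have := h this
          simp at this
      have hcards := Finset.card_lt_card hsub
      have hbk : (Finset.univ.filter (fun w => σ w < σ b)).card ≤ k := by omega
      have hIH := ih b hbk
      have hcast : ((Finset.univ.filter (fun w => σ w < σ b)).card : ℤ) + 1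
          ≤ ((Finset.univ.filter (fun w => σ w < σ v)).card : ℤ) := by
        exact_mod_cast hcards
      nlinarith [mul_le_mul_of_nonneg_left hcast hC]
  intro v
  calc σ v ≤ C * ((Finset.univ.filter (fun w => σ w < σ v)).card : ℤ) :=
        key _ v le_rfl
    _ ≤ C * (Fintype.card V : ℤ) := by
        refine mul_le_mul_of_nonneg_left ?_ hC
        exact_mod_cast Finset.card_le_univ _
end Proofs3
section Proofs4
set_option linter.unusedSectionVars false
set_option linter.unusedVariables false
variable {V : Type} [Fintype V] [DecidableEq V] (G : Multigraph V)

lemma sum_ind (S : Finset V) : ∑ x, ind (V := V) S x = (S.card : ℤ) := by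
  unfold ind
  rw [Finset.sum_ite_mem, Finset.univ_inter, Finset.sum_const]
  simp

lemma exists_reduced (hG : G.Connected) (q : V) (D : V → ℤ) :
    ∃ σ : V → ℤ, (∀ v, v ≠ q → 0 ≤ D v - lap G σ v) ∧
      NoStuckOn G (Finset.univ.erase q) (fun v => D v - lap G σ v) := by
  obtain ⟨σ0, hσ0⟩ := stage1 G hG D q
  set D1 : V → ℤ := fun v => D v - lap G σ0 v with hD1def
  have hD1 : ∀ v, v ≠ q → 0 ≤ D1 v := hσ0
  set P : ℤ → Prop := fun s => ∃ σ : V → ℤ, σ q = 0 ∧ (∀ v, 0 ≤ σ v) ∧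
    (∀ v, v ≠ q → 0 ≤ D1 v - lap G σ v) ∧ s = ∑ v, σ v with hPdef
  have hinh : P 0 := by
    refine ⟨fun _ => 0, rfl, fun _ => le_rfl, fun v hv => ?_, by simp⟩
    rw [lap_zero]
    simpa using hD1 v hv
  have hbdd : ∃ b : ℤ, ∀ z, P z → z ≤ b := by
    set C : ℤ := ∑ w ∈ Finset.univ.erase q, D1 w
    refine ⟨(Fintype.card V : ℤ) * (C * (Fintype.card V : ℤ)), ?_⟩
    rintro z ⟨σ, hq, hnn, hle, rfl⟩
    have hb := sigma_bound G hG q D1 hD1 σ hq hnn (fun v hv => by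
      have := hle v hv
      omega)
    calc ∑ v, σ v ≤ ∑ _v : V, C * (Fintype.card V : ℤ) :=
          Finset.sum_le_sum fun v _ => hb v
      _ = (Fintype.card V : ℤ) * (C * (Fintype.card V : ℤ)) := by
          rw [Finset.sum_const, Finset.card_univ]
          simp [mul_comm]
  obtain ⟨s, ⟨σ1, hq1, hnn1, hle1, hsum1⟩, hmax⟩ :=
    Int.exists_greatest_of_bdd hbdd ⟨0, hinh⟩
  refine ⟨fun x => σ0 x + σ1 x, ?_, ?_⟩
  · intro v hv
    have hl : lap G (fun x => σ0 x + σ1 x) v = lap G σ0 v + lap G σ1 v := lap_add G _ _ v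
    have h2 : 0 ≤ D1 v - lap G σ1 v := hle1 v hv
    have hD : D1 v = D v - lap G σ0 v := rfl
    omega
  · intro S hSsub hSne
    by_contra hcon
    push_neg at hcon
    have hqS : q ∉ S := fun h => by
      have := hSsub h
      exact (Finset.mem_erase.mp this).1 rfl
    have hcon' : ∀ v ∈ S, (eTo G v Sᶜ : ℤ) ≤ D1 v - lap G σ1 v := by
      intro v hv
      have h := hcon v hv
      have hlapeq : lap G (fun x => σ0 x + σ1 x) v = lap G σ0 v + lap G σ1 v :=
        lap_add G _ _ v
      have hD : D1 v = D v - lap G σ0 v := rfl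
      omega
    have hPnew : P (s + S.card) := by
      refine ⟨fun x => σ1 x + ind S x, ?_, ?_, ?_, ?_⟩
      · simp [ind, hqS, hq1]
      · intro v
        have := hnn1 v
        show 0 ≤ σ1 v + ind S v
        unfold ind
        split <;> omega
      · intro v hv
        have hlapeq : lap G (fun x => σ1 x + ind S x) v
            = lap G σ1 v + lap G (ind S) v := lap_add G _ _ v
        have hind := lap_ind G S v
        have h1 : 0 ≤ D1 v - lap G σ1 v := hle1 v hv
        show 0 ≤ D1 v - lap G (fun x => σ1 x + ind S x) v
        by_cases hvS : v ∈ S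
        · rw [if_pos hvS] at hind
          have := hcon' v hvS
          omega
        · rw [if_neg hvS] at hind
          have h2 : (0:ℤ) ≤ (eTo G v S : ℤ) := Int.natCast_nonneg _
          omega
      · rw [Finset.sum_add_distrib, sum_ind, hsum1]
    have := hmax (s + S.card) hPnew
    have hpos : 0 < S.card := Finset.card_pos.mpr hSne
    omega

lemma unwin (q : V) (D : V → ℤ) (hq : D q < 0)
    (hns : NoStuckOn G (Finset.univ.erase q) D) : ¬ Winnable G D := by
  rw [winnable_iff]
  rintro ⟨σ, hσ⟩
  set τ : V → ℤ := fun x => σ x - σ q with hτdef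
  have hlapτ : ∀ v, lap G τ v = lap G σ v := by
    intro v
    rw [hτdef]
    have : lap G (fun x => σ x - (fun _ : V => σ q) x) v
        = lap G σ v - lap G (fun _ => σ q) v := lap_sub G _ _ v
    rw [this, lap_const, sub_zero]
  have hτq : τ q = 0 := by simp [hτdef]
  obtain ⟨v0, _, hv0⟩ := Finset.exists_max_image Finset.univ τ ⟨q, Finset.mem_univ q⟩
  by_cases hm : τ v0 ≤ 0
  · have hall : ∀ w, τ w ≤ 0 := fun w => le_trans (hv0 w (Finset.mem_univ w)) hm
    have hlapq : 0 ≤ lap G τ q := by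
      unfold lap
      refine Finset.sum_nonneg fun w _ => ?_
      have := hall w
      exact mul_nonneg (Int.natCast_nonneg _) (by omega)
    have := hσ q
    rw [← hlapτ q] at this
    omega
  · push_neg at hm
    set A : Finset V := Finset.univ.filter (fun w => τ w = τ v0) with hAdef
    have hAsub : A ⊆ Finset.univ.erase q := by
      intro w hw
      have hw' : τ w = τ v0 := (Finset.mem_filter.mp hw).2
      refine Finset.mem_erase.mpr ⟨fun h => ?_, Finset.mem_univ w⟩
      subst h
      omega
    have hAne : A.Nonempty := ⟨v0, by simp [hAdef]⟩
    obtain ⟨v, hvA, hvs⟩ := hns A hAsub hAne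
    have hτv : τ v = τ v0 := (Finset.mem_filter.mp hvA).2
    have hlapv : (eTo G v Aᶜ : ℤ) ≤ lap G τ v := by
      have hterm : ∀ u ∈ Finset.univ, (if u ∈ Aᶜ then (G.E v u : ℤ) else 0)
          ≤ (G.E v u : ℤ) * (τ v - τ u) := by
        intro u _
        by_cases hu : u ∈ A
        · rw [if_neg (by simpa using hu)]
          have hu' : τ u = τ v0 := (Finset.mem_filter.mp hu).2
          refine mul_nonneg (Int.natCast_nonneg _) (by omega)
        · rw [if_pos (Finset.mem_compl.mpr hu)]
          have hu1 : τ u ≤ τ v0 := hv0 u (Finset.mem_univ u)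
          have hu2 : τ u ≠ τ v0 := fun h => hu (by simp [hAdef, h])
          have : 1 ≤ τ v - τ u := by omega
          exact le_mul_of_one_le_right (Int.natCast_nonneg _) this
      calc (eTo G v Aᶜ : ℤ) = ∑ u ∈ Finset.univ, (if u ∈ Aᶜ then (G.E v u : ℤ) else 0) := by
            rw [Finset.sum_ite_mem, Finset.univ_inter]
            unfold eTo
            push_cast
            rfl
        _ ≤ ∑ u, (G.E v u : ℤ) * (τ v - τ u) := Finset.sum_le_sum hterm
        _ = lap G τ v := rfl
    have := hσ v
    rw [← hlapτ v] at this
    omega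

end Proofs4
section Proofs5
set_option linter.unusedSectionVars false
set_option linter.unusedVariables false
variable {V : Type} [Fintype V] [DecidableEq V] (G : Multigraph V)

lemma eTo_mono (v : V) {T T' : Finset V} (h : T ⊆ T') : eTo G v T ≤ eTo G v T' :=
  Finset.sum_le_sum_of_subset h

lemma cut_identity (S : Finset V) (v0 : V) (hv0 : v0 ∈ S) :
    ∑ v ∈ S, G.val v + ∑ v ∈ S, eTo G v Sᶜ
      = (∑ v ∈ S.erase v0, G.val v + ∑ v ∈ S.erase v0, eTo G v (S.erase v0)ᶜ)
        + 2 * eTo G v0 Sᶜ := by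
  set S' := S.erase v0 with hS'
  have hval : ∑ v ∈ S, G.val v = G.val v0 + ∑ v ∈ S', G.val v :=
    (Finset.add_sum_erase S G.val hv0).symm
  have hcut : ∑ v ∈ S, eTo G v Sᶜ = eTo G v0 Sᶜ + ∑ v ∈ S', eTo G v Sᶜ :=
    (Finset.add_sum_erase S (fun v => eTo G v Sᶜ) hv0).symm
  have hcompl : (S' : Finset V)ᶜ = insert v0 Sᶜ := Finset.compl_erase
  have hv0nc : v0 ∉ (Sᶜ : Finset V) := by simp [hv0]
  have hins : ∀ v, eTo G v (S'ᶜ) = G.E v v0 + eTo G v Sᶜ := by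
    intro v
    rw [hcompl]
    exact Finset.sum_insert hv0nc
  have hsum' : ∑ v ∈ S', eTo G v S'ᶜ
      = ∑ v ∈ S', G.E v v0 + ∑ v ∈ S', eTo G v Sᶜ := by
    rw [Finset.sum_congr rfl fun v _ => hins v, Finset.sum_add_distrib]
  have hsymm : ∑ v ∈ S', G.E v v0 = eTo G v0 S' := by
    unfold eTo
    exact Finset.sum_congr rfl fun v _ => G.symm v v0
  have hval0 : G.val v0 = eTo G v0 Sᶜ + eTo G v0 S' := by
    have h1 : eTo G v0 S' + eTo G v0 S'ᶜ = G.val v0 := by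
      unfold eTo Multigraph.val
      exact Finset.sum_add_sum_compl S' _
    have h2 : eTo G v0 S'ᶜ = eTo G v0 Sᶜ := by
      rw [hins v0, G.loopless, zero_add]
    omega
  omega

lemma deg_bound (A : Finset V) (D : V → ℤ) (hns : NoStuckOn G A D) :
    ∀ (k : ℕ) (S : Finset V), S.card ≤ k → S ⊆ A →
      2 * ∑ v ∈ S, D v
        ≤ (∑ v ∈ S, (G.val v : ℤ)) + (∑ v ∈ S, (eTo G v Sᶜ : ℤ))
          - 2 * (S.card : ℤ) := by
  intro k
  induction k with
  | zero =>
    intro S hc _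
    have : S = ∅ := Finset.card_eq_zero.mp (Nat.le_zero.mp hc)
    subst this
    simp
  | succ k ih =>
    intro S hc hSA
    rcases Finset.eq_empty_or_nonempty S with rfl | hne
    · simp
    obtain ⟨v0, hv0S, hv0⟩ := hns S hSA hne
    set S' := S.erase v0 with hS'
    have hS'A : S' ⊆ A := fun w hw => hSA (Finset.mem_of_mem_erase hw)
    have hcards : S'.card = S.card - 1 := Finset.card_erase_of_mem hv0S
    have hcpos : 0 < S.card := Finset.card_pos.mpr hne
    have hIH := ih S' (by omega) hS'A
    have hid := cut_identity G S v0 hv0S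
    have hDsplit : ∑ v ∈ S, D v = D v0 + ∑ v ∈ S', D v :=
      (Finset.add_sum_erase S D hv0S).symm
    -- put everything over ℤ
    have hidz : (∑ v ∈ S, (G.val v : ℤ)) + (∑ v ∈ S, (eTo G v Sᶜ : ℤ))
        = ((∑ v ∈ S', (G.val v : ℤ)) + (∑ v ∈ S', (eTo G v S'ᶜ : ℤ)))
          + 2 * (eTo G v0 Sᶜ : ℤ) := by
      exact_mod_cast congrArg (Nat.cast : ℕ → ℤ) hid
    have hcardz : ((S'.card : ℤ)) = (S.card : ℤ) - 1 := by
      rw [hcards]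
      push_cast [hcpos]
      omega
    omega

lemma slack (D : V → ℤ) :
    ∀ (k : ℕ) (S : Finset V), S.card ≤ k → NoStuckOn G S D →
      (2 * ∑ v ∈ S, D v
        < (∑ v ∈ S, (G.val v : ℤ)) + (∑ v ∈ S, (eTo G v Sᶜ : ℤ))
          - 2 * (S.card : ℤ)) →
      ∃ v ∈ S, NoStuckOn G S (fun w => D w + if w = v then 1 else 0) := by
  intro k
  induction k with
  | zero =>
    intro S hc _ hnum
    have : S = ∅ := Finset.card_eq_zero.mp (Nat.le_zero.mp hc)
    subst this
    simp at hnum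
  | succ k ih =>
    intro S hc hns hnum
    rcases Finset.eq_empty_or_nonempty S with rfl | hne
    · simp at hnum
    obtain ⟨v0, hv0S, hv0⟩ := hns S (le_refl _) hne
    by_cases hcase : D v0 + 1 < (eTo G v0 Sᶜ : ℤ)
    · refine ⟨v0, hv0S, ?_⟩
      intro T hTS hTne
      by_cases hv0T : v0 ∈ T
      · refine ⟨v0, hv0T, ?_⟩
        show D v0 + (if v0 = v0 then (1:ℤ) else 0) < (eTo G v0 Tᶜ : ℤ)
        rw [if_pos rfl]
        have hmono : (eTo G v0 Sᶜ : ℤ) ≤ (eTo G v0 Tᶜ : ℤ) := by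
          exact_mod_cast eTo_mono G v0 (Finset.compl_subset_compl.mpr hTS)
        omega
      · obtain ⟨w, hwT, hw⟩ := hns T hTS hTne
        refine ⟨w, hwT, ?_⟩
        show D w + (if w = v0 then (1:ℤ) else 0) < (eTo G w Tᶜ : ℤ)
        rw [if_neg (fun h : w = v0 => hv0T (h ▸ hwT))]
        omega
    · push_neg at hcase
      have hv0eq : D v0 = (eTo G v0 Sᶜ : ℤ) - 1 := by omega
      set S' := S.erase v0 with hS'
      have hnsS' : NoStuckOn G S' D := fun T hT hTne =>
        hns T (hT.trans (Finset.erase_subset v0 S)) hTne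
      have hcards : S'.card = S.card - 1 := Finset.card_erase_of_mem hv0S
      have hcpos : 0 < S.card := Finset.card_pos.mpr hne
      have hid := cut_identity G S v0 hv0S
      have hidz : (∑ v ∈ S, (G.val v : ℤ)) + (∑ v ∈ S, (eTo G v Sᶜ : ℤ))
          = ((∑ v ∈ S', (G.val v : ℤ)) + (∑ v ∈ S', (eTo G v S'ᶜ : ℤ)))
            + 2 * (eTo G v0 Sᶜ : ℤ) := by
        exact_mod_cast congrArg (Nat.cast : ℕ → ℤ) hid
      have hDsplit : ∑ v ∈ S, D v = D v0 + ∑ v ∈ S', D v :=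
        (Finset.add_sum_erase S D hv0S).symm
      have hcardz : ((S'.card : ℤ)) = (S.card : ℤ) - 1 := by
        rw [hcards]
        push_cast [hcpos]
        omega
      have hnum' : 2 * ∑ v ∈ S', D v
          < (∑ v ∈ S', (G.val v : ℤ)) + (∑ v ∈ S', (eTo G v S'ᶜ : ℤ))
            - 2 * (S'.card : ℤ) := by omega
      obtain ⟨v, hvS', hvNS⟩ := ih S' (by omega) hnsS' hnum'
      have hvv0 : v ≠ v0 := Finset.ne_of_mem_erase hvS'
      refine ⟨v, Finset.mem_of_mem_erase hvS', ?_⟩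
      intro T hTS hTne
      by_cases hv0T : v0 ∈ T
      · refine ⟨v0, hv0T, ?_⟩
        show D v0 + (if v0 = v then (1:ℤ) else 0) < (eTo G v0 Tᶜ : ℤ)
        rw [if_neg (fun h : v0 = v => hvv0 h.symm)]
        have hmono : (eTo G v0 Sᶜ : ℤ) ≤ (eTo G v0 Tᶜ : ℤ) := by
          exact_mod_cast eTo_mono G v0 (Finset.compl_subset_compl.mpr hTS)
        omega
      · have hTS' : T ⊆ S' := fun w hw =>
          Finset.mem_erase.mpr ⟨fun h => hv0T (h ▸ hw), hTS hw⟩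
        exact hvNS T hTS' hTne

end Proofs5
section Proofs6
set_option linter.unusedSectionVars false
set_option linter.unusedVariables false
variable {V : Type} [Fintype V] [DecidableEq V] (G : Multigraph V)

lemma double_edgeCount : ∑ u, ∑ w, G.E u w = 2 * edgeCount G := by
  letI : LinearOrder V := LinearOrder.lift'
    (fun v => Fintype.equivFin V v) (fun a b h => (Fintype.equivFin V).injective h)
  set P := (Finset.univ : Finset V) ×ˢ (Finset.univ : Finset V) with hP
  have hsum : ∑ u, ∑ w, G.E u w = ∑ p ∈ P, G.E p.1 p.2 := by
    rw [hP, Finset.sum_product]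
  set A := P.filter (fun p : V × V => p.1 < p.2) with hA
  set B := (P.filter (fun p : V × V => ¬ p.1 < p.2)).filter
    (fun p : V × V => p.2 < p.1) with hB
  set Dg := (P.filter (fun p : V × V => ¬ p.1 < p.2)).filter
    (fun p : V × V => ¬ p.2 < p.1) with hDg
  have hsplit1 : ∑ p ∈ P, G.E p.1 p.2
      = ∑ p ∈ A, G.E p.1 p.2 + ∑ p ∈ P.filter (fun p : V × V => ¬ p.1 < p.2), G.E p.1 p.2 := by
    rw [hA, Finset.sum_filter_add_sum_filter_not]
  have hsplit2 : ∑ p ∈ P.filter (fun p : V × V => ¬ p.1 < p.2), G.E p.1 p.2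
      = ∑ p ∈ B, G.E p.1 p.2 + ∑ p ∈ Dg, G.E p.1 p.2 := by
    rw [hB, hDg, Finset.sum_filter_add_sum_filter_not]
  have hdiag : ∑ p ∈ Dg, G.E p.1 p.2 = 0 := by
    refine Finset.sum_eq_zero fun p hp => ?_
    rw [hDg] at hp
    have h1 := (Finset.mem_filter.mp hp).2
    have h2 := (Finset.mem_filter.mp (Finset.mem_filter.mp hp).1).2
    have : p.1 = p.2 := le_antisymm (not_lt.mp h1) (not_lt.mp h2)
    rw [this, G.loopless]
  have hBA : ∑ p ∈ B, G.E p.1 p.2 = ∑ p ∈ A, G.E p.1 p.2 := by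
    refine Finset.sum_nbij' (fun p => Prod.swap p) (fun p => Prod.swap p) ?_ ?_ ?_ ?_ ?_
    · intro p hp
      rw [hB] at hp
      have h2 := (Finset.mem_filter.mp hp).2
      rw [hA]
      refine Finset.mem_filter.mpr ⟨by simp [hP], h2⟩
    · intro p hp
      rw [hA] at hp
      have h2 := (Finset.mem_filter.mp hp).2
      rw [hB]
      refine Finset.mem_filter.mpr ⟨Finset.mem_filter.mpr ⟨by simp [hP], ?_⟩, ?_⟩
      · simp only [Prod.fst_swap, Prod.snd_swap, not_lt]
        exact le_of_lt h2
      · simpa using h2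
    · intro p hp
      simp
    · intro p hp
      simp
    · intro p hp
      exact G.symm p.1 p.2
  have key : ∑ u, ∑ w, G.E u w = 2 * ∑ p ∈ A, G.E p.1 p.2 := by
    omega
  unfold edgeCount
  rw [key, Nat.mul_div_cancel_left _ (by norm_num : 0 < 2)]

end Proofs6

section Proofs7
set_option linter.unusedSectionVars false
set_option linter.unusedVariables false
variable {V : Type} [Fintype V] [DecidableEq V] (G : Multigraph V)

lemma deg_lap (σ : V → ℤ) : ∑ v, lap G σ v = 0 :=
  sum_antisym G Finset.univ σ

lemma win_shift (D : V → ℤ) (σ : V → ℤ) (c : V → ℤ) :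
    Winnable G (fun v => D v + c v)
      ↔ Winnable G (fun v => (D v - lap G σ v) + c v) := by
  rw [winnable_iff, winnable_iff]
  constructor
  · rintro ⟨τ, hτ⟩
    refine ⟨fun x => τ x - σ x, fun v => ?_⟩
    have h : 0 ≤ (D v + c v) - lap G τ v := hτ v
    have hl : lap G (fun x => τ x - σ x) v = lap G τ v - lap G σ v :=
      lap_sub G _ _ v
    show 0 ≤ (D v - lap G σ v + c v) - lap G (fun x => τ x - σ x) v
    omega
  · rintro ⟨τ, hτ⟩
    refine ⟨fun x => τ x + σ x, fun v => ?_⟩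
    have h : 0 ≤ (D v - lap G σ v + c v) - lap G τ v := hτ v
    have hl : lap G (fun x => τ x + σ x) v = lap G τ v + lap G σ v :=
      lap_add G _ _ v
    show 0 ≤ (D v + c v) - lap G (fun x => τ x + σ x) v
    omega

end Proofs7


/-- Every maximal unwinnable divisor has degree `g - 1`; consequently every divisor of
degree at least `g` is winnable. -/
theorem maximal_unwinnable_degree (G : Multigraph V) (hG : G.Connected) (D : V → ℤ) :
    (MaximalUnwinnable G D → divDeg D = genus G - 1) ∧
    (genus G ≤ divDeg D → Winnable G D) := by

  by_cases hV : Nonempty V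
  case neg =>
    have hwin : Winnable G D :=
      ⟨D, Relation.ReflTransGen.refl, fun v => absurd ⟨v⟩ hV⟩
    exact ⟨fun hmu => absurd hwin hmu.1, fun _ => hwin⟩
  obtain ⟨q⟩ := hV
  obtain ⟨σr, hr1, hr2⟩ := exists_reduced G hG q D
  -- notation
  have hn1 : 1 ≤ Fintype.card V := Fintype.card_pos_iff.mpr ⟨q⟩
  have hcardz : (((Finset.univ.erase q).card : ℤ)) = (Fintype.card V : ℤ) - 1 := by
    rw [Finset.card_erase_of_mem (Finset.mem_univ q), Finset.card_univ]
    push_cast [hn1]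
    omega
  -- degree decomposition
  have hA : (D q - lap G σr q) + ∑ v ∈ Finset.univ.erase q, (D v - lap G σr v)
      = ∑ v, (D v - lap G σr v) :=
    Finset.add_sum_erase Finset.univ (fun v => D v - lap G σr v) (Finset.mem_univ q)
  have hdegD : divDeg D = ∑ v, (D v - lap G σr v) := by
    unfold divDeg
    rw [Finset.sum_sub_distrib, deg_lap, sub_zero]
  -- edge counting identity
  have hcompl : ((Finset.univ.erase q)ᶜ : Finset V) = {q} := by
    rw [Finset.compl_erase]
    simp
  have hident : ∑ v ∈ Finset.univ.erase q, G.val v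
      + ∑ v ∈ Finset.univ.erase q, eTo G v ((Finset.univ.erase q)ᶜ)
      = ∑ v, G.val v := by
    rw [hcompl]
    have h1 : ∀ v, eTo G v ({q} : Finset V) = G.E v q := fun v =>
      Finset.sum_singleton _ _
    rw [Finset.sum_congr rfl fun v _ => h1 v]
    have h2 : ∑ v ∈ Finset.univ.erase q, G.E v q
        = ∑ v ∈ Finset.univ.erase q, G.E q v :=
      Finset.sum_congr rfl fun v _ => G.symm v q
    have h3 : G.E q q + ∑ v ∈ Finset.univ.erase q, G.E q v = G.val q :=
      Finset.add_sum_erase _ _ (Finset.mem_univ q)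
    have h4 : G.val q + ∑ v ∈ Finset.univ.erase q, G.val v = ∑ v, G.val v :=
      Finset.add_sum_erase _ _ (Finset.mem_univ q)
    rw [G.loopless] at h3
    omega
  have hval2E : ∑ v, G.val v = 2 * edgeCount G := double_edgeCount G
  have hcombz : (∑ v ∈ Finset.univ.erase q, (G.val v : ℤ))
      + (∑ v ∈ Finset.univ.erase q, (eTo G v ((Finset.univ.erase q)ᶜ) : ℤ))
      = 2 * (edgeCount G : ℤ) := by
    exact_mod_cast congrArg (Nat.cast : ℕ → ℤ) (hident.trans hval2E)
  have hgen : genus G = (edgeCount G : ℤ) - (Fintype.card V : ℤ) + 1 := rfl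
  -- the degree bound
  have hbound := deg_bound G (Finset.univ.erase q) (fun v => D v - lap G σr v)
    hr2 (Finset.univ.erase q).card (Finset.univ.erase q) le_rfl (Finset.Subset.refl _)
  have hbound' : 2 * ∑ v ∈ Finset.univ.erase q, (D v - lap G σr v)
      ≤ (∑ v ∈ Finset.univ.erase q, (G.val v : ℤ))
        + (∑ v ∈ Finset.univ.erase q, (eTo G v ((Finset.univ.erase q)ᶜ) : ℤ))
        - 2 * (((Finset.univ.erase q).card : ℤ)) := hbound
  have hsum_le : ∑ v ∈ Finset.univ.erase q, (D v - lap G σr v) ≤ genus G := by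
    rw [hgen]
    omega
  constructor
  · rintro ⟨hnw, hmax⟩
    -- value at q is negative
    have hq_neg : D q - lap G σr q < 0 := by
      by_contra h
      push_neg at h
      refine hnw ((winnable_iff G D).mpr ⟨σr, fun v => ?_⟩)
      by_cases hv : v = q
      · subst hv; omega
      · exact hr1 v hv
    -- value at q is exactly -1
    have hq_eq : D q - lap G σr q = -1 := by
      by_contra h
      have hle2 : D q - lap G σr q ≤ -2 := by omega
      have hwq := hmax q
      rw [win_shift G D σr (fun w => if w = q then 1 else 0)] at hwq
      have hnsE : NoStuckOn G (Finset.univ.erase q)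
          (fun w => (D w - lap G σr w) + if w = q then 1 else 0) := by
        intro S hS hne
        obtain ⟨v, hvS, hlt⟩ := hr2 S hS hne
        have hlt' : D v - lap G σr v < (eTo G v Sᶜ : ℤ) := hlt
        have hvq : v ≠ q := (Finset.mem_erase.mp (hS hvS)).1
        refine ⟨v, hvS, ?_⟩
        show (D v - lap G σr v) + (if v = q then (1:ℤ) else 0) < (eTo G v Sᶜ : ℤ)
        rw [if_neg hvq]
        omega
      have hEq : (D q - lap G σr q) + (if q = q then (1:ℤ) else 0) < 0 := by
        rw [if_pos rfl]
        omega
      exact unwin G q _ hEq hnsE hwq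
    -- the sum off q is exactly the genus
    have hsum_eq : ∑ v ∈ Finset.univ.erase q, (D v - lap G σr v) = genus G := by
      by_contra h
      have hlt : ∑ v ∈ Finset.univ.erase q, (D v - lap G σr v) < genus G := by
        omega
      have hnum : 2 * ∑ v ∈ Finset.univ.erase q, (D v - lap G σr v)
          < (∑ v ∈ Finset.univ.erase q, (G.val v : ℤ))
            + (∑ v ∈ Finset.univ.erase q, (eTo G v ((Finset.univ.erase q)ᶜ) : ℤ))
            - 2 * (((Finset.univ.erase q).card : ℤ)) := by
        rw [hgen] at hlt
        omega
      obtain ⟨v, hvS, hvNS⟩ := slack G (fun v => D v - lap G σr v)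
        (Finset.univ.erase q).card (Finset.univ.erase q) le_rfl hr2 hnum
      have hvq : v ≠ q := (Finset.mem_erase.mp hvS).1
      have hwv := hmax v
      rw [win_shift G D σr (fun w => if w = v then 1 else 0)] at hwv
      have hEq : (D q - lap G σr q) + (if q = v then (1:ℤ) else 0) < 0 := by
        rw [if_neg (fun h : q = v => hvq h.symm)]
        omega
      exact unwin G q _ hEq hvNS hwv
    rw [hdegD, ← hA, hq_eq, hsum_eq]
    ring
  · intro hdeg
    refine (winnable_iff G D).mpr ⟨σr, fun v => ?_⟩
    by_cases hv : v = q
    · subst hv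
      rw [hdegD, ← hA] at hdeg
      omega
    · exact hr1 v hv
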